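/- For the Dutch windmill graph D_n^{(m)} with m ≥ 4, the super domination number satisfies γ_sp(D_n^{(m)}) ≤ n⌈(m−1)/2⌉ + 1. -/

import Mathlib

open SimpleGraph

/-- A super dominating set: a dominating set `S` such that every vertex `u ∉ S`
has a private "super" dominator `v ∈ S` with `N(v) ∩ (V \ S) = {u}`. -/
def IsSuperDominatingSet {V : Type*} (G : SimpleGraph V) (S : Finset V) : Prop :=
  (∀ u ∉ S, ∃ v ∈ S, G.Adj v u) ∧
  (∀ u ∉ S, ∃ v ∈ S, ∀ w, (G.Adj v w ∧ w ∉ S) ↔ w = u)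

/-- The super domination number: minimum size of a super dominating set. -/
noncomputable def superDominationNumber {V : Type*} (G : SimpleGraph V) : ℕ :=
  sInf {n | ∃ S : Finset V, IsSuperDominatingSet G S ∧ S.card = n}

/-- The Dutch windmill graph `D_n^{(m)}`: `n` copies of the cycle `C_m` sharing a common
vertex (the `Sum.inl` vertex).  The `i`-th copy has path vertices `(i, 0), …, (i, m-2)`,
with the centre adjacent to the two endpoints. -/
def dutchWindmill (n m : ℕ) : SimpleGraph (Unit ⊕ Fin n × Fin (m - 1)) :=
  SimpleGraph.fromRel (fun a b =>
    match a, b with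
    | Sum.inl _, Sum.inr (_, k) => k.val = 0 ∨ k.val = m - 2
    | Sum.inr (i, k), Sum.inr (j, l) => i = j ∧ l.val = k.val + 1
    | _, _ => False)

/-! ### Auxiliary construction -/

def windP (t : ℕ) (k : ℕ) : Prop :=
  k % 4 = 1 ∨ k % 4 = 2 ∨ (t % 4 = 1 ∧ k = t - 1)

instance (t k : ℕ) : Decidable (windP t k) := by unfold windP; infer_instance

def windB (n m : ℕ) : Unit ⊕ Fin n × Fin (m - 1) → Bool
  | .inl _ => true
  | .inr (_, k) => decide (windP (m - 1) k.val)

def windS (n m : ℕ) : Finset (Unit ⊕ Fin n × Fin (m - 1)) :=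
  Finset.univ.filter (fun v => windB n m v = true)

lemma mem_windS_inl (n m : ℕ) : (Sum.inl () : Unit ⊕ Fin n × Fin (m-1)) ∈ windS n m := by
  simp only [windS, Finset.mem_filter, Finset.mem_univ, true_and]
  simp [windB]

lemma mem_windS_inr (n m : ℕ) (i : Fin n) (k : Fin (m-1)) :
    (Sum.inr (i, k) : Unit ⊕ Fin n × Fin (m-1)) ∈ windS n m ↔ windP (m-1) k.val := by
  simp only [windS, Finset.mem_filter, Finset.mem_univ, true_and]
  simp [windB]

/-! ### Counting -/

lemma countA (t : ℕ) :
    ((Finset.range t).filter (fun k => k % 4 = 1 ∨ k % 4 = 2)).card = (t+2)/4 + (t+1)/4 := by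
  induction t with
  | zero => simp
  | succ t ih =>
    rw [Finset.range_add_one, Finset.filter_insert]
    split_ifs with h
    · rw [Finset.card_insert_of_notMem (by simp), ih]; omega
    · rw [ih]; omega

lemma countB (t : ℕ) :
    ((Finset.range t).filter (fun k => windP t k)).card = (t+1)/2 := by
  by_cases ht : t % 4 = 1
  · have htpos : 1 ≤ t := by omega
    have hset : (Finset.range t).filter (fun k => windP t k)
        = insert (t-1) ((Finset.range t).filter (fun k => k % 4 = 1 ∨ k % 4 = 2)) := by
      refine Finset.ext fun k => ?_
      simp only [Finset.mem_insert, Finset.mem_filter, Finset.mem_range]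
      simp only [windP]
      constructor
      · rintro ⟨hk, h1 | h2 | h3⟩
        · exact Or.inr ⟨hk, Or.inl h1⟩
        · exact Or.inr ⟨hk, Or.inr h2⟩
        · exact Or.inl h3.2
      · rintro (rfl | ⟨hk, h⟩)
        · exact ⟨by omega, Or.inr (Or.inr ⟨ht, rfl⟩)⟩
        · exact ⟨hk, by tauto⟩
    rw [hset, Finset.card_insert_of_notMem (by simp; omega), countA]
    omega
  · have hset : (Finset.range t).filter (fun k => windP t k)
        = (Finset.range t).filter (fun k => k % 4 = 1 ∨ k % 4 = 2) := by
      apply Finset.filter_congr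
      intro k _
      simp only [windP]
      tauto
    rw [hset, countA]
    omega

lemma windS_card (n m : ℕ) : (windS n m).card = n * ((m - 1 + 1) / 2) + 1 := by
  classical
  rw [windS, Finset.card_filter, Fintype.sum_sum_type, Fintype.sum_prod_type]
  have h1 : ∑ u : Unit, (if windB n m (Sum.inl u) = true then 1 else 0) = 1 := by
    simp [windB]
  have h2 : ∀ i : Fin n,
      ∑ k : Fin (m-1), (if windB n m (Sum.inr (i, k)) = true then 1 else 0)
        = (m - 1 + 1) / 2 := by
    intro i
    have : ∀ k : Fin (m-1), (if windB n m (Sum.inr (i, k)) = true then 1 else 0)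
        = (fun j : ℕ => if windP (m-1) j then 1 else 0) k.val := by
      intro k; simp [windB]
    simp only [this]
    rw [Fin.sum_univ_eq_sum_range (fun j : ℕ => if windP (m-1) j then 1 else 0) (m-1)]
    rw [← Finset.card_filter]
    exact countB (m-1)
  rw [h1]
  simp only [h2]
  rw [Finset.sum_const, Finset.card_univ, Fintype.card_fin, smul_eq_mul]
  omega

/-! ### The super domination property -/

lemma windS_superPart (n m : ℕ) (hm : 4 ≤ m) :
    ∀ u ∉ windS n m, ∃ v ∈ windS n m,
      ∀ w, ((dutchWindmill n m).Adj v w ∧ w ∉ windS n m) ↔ w = u := by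
  intro u hu
  match u with
  | Sum.inl x => exact absurd (mem_windS_inl n m) hu
  | Sum.inr (i, k) =>
    rw [mem_windS_inr] at hu
    have hk := k.isLt
    have hu' : ¬ (k.val % 4 = 1 ∨ k.val % 4 = 2 ∨ ((m-1) % 4 = 1 ∧ k.val = m - 1 - 1)) := hu
    have h4 : k.val = 0 ∨ (k.val % 4 = 0 ∧ 0 < k.val) ∨ k.val % 4 = 3 := by omega
    rcases h4 with h0 | ⟨h0, hpos⟩ | h3
    · -- k = 0, dominator is vertex 1
      have h1lt : 1 < m - 1 := by omega
      refine ⟨Sum.inr (i, ⟨1, h1lt⟩), (mem_windS_inr n m i _).mpr (show windP (m-1) 1 from Or.inl (by omega)), ?_⟩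
      intro w
      constructor
      · rintro ⟨hadj, hw⟩
        match w with
        | Sum.inl x => exact absurd (mem_windS_inl n m) hw
        | Sum.inr (j, l) =>
          rw [mem_windS_inr] at hw
          have hw' : ¬ (l.val % 4 = 1 ∨ l.val % 4 = 2 ∨ ((m-1) % 4 = 1 ∧ l.val = m - 1 - 1)) := hw
          simp only [dutchWindmill, fromRel_adj] at hadj
          obtain ⟨hne, hrel⟩ := hadj
          have hji : j = i := by rcases hrel with ⟨h, _⟩ | ⟨h, _⟩ <;> simp [h]
          have hl : l.val = k.val := by
            rcases hrel with ⟨_, h⟩ | ⟨_, h⟩ <;> omega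
          subst hji
          have hlk : l = k := Fin.ext hl
          rw [hlk]
      · rintro rfl
        refine ⟨?_, by rw [mem_windS_inr]; exact hu⟩
        simp only [dutchWindmill, fromRel_adj]
        refine ⟨?_, ?_⟩
        · intro hc
          simp only [Sum.inr.injEq, Prod.mk.injEq, Fin.ext_iff] at hc
          omega
        · right
          exact ⟨trivial, by first | trivial | omega⟩
    · -- k % 4 = 0, k > 0, dominator is k+1
      have hlt : k.val + 1 < m - 1 := by omega
      refine ⟨Sum.inr (i, ⟨k.val + 1, hlt⟩), (mem_windS_inr n m i _).mpr (show windP (m-1) (k.val+1) from Or.inl (by omega)), ?_⟩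
      intro w
      constructor
      · rintro ⟨hadj, hw⟩
        match w with
        | Sum.inl x => exact absurd (mem_windS_inl n m) hw
        | Sum.inr (j, l) =>
          rw [mem_windS_inr] at hw
          have hw' : ¬ (l.val % 4 = 1 ∨ l.val % 4 = 2 ∨ ((m-1) % 4 = 1 ∧ l.val = m - 1 - 1)) := hw
          simp only [dutchWindmill, fromRel_adj] at hadj
          obtain ⟨hne, hrel⟩ := hadj
          have hji : j = i := by rcases hrel with ⟨h, _⟩ | ⟨h, _⟩ <;> simp [h]
          have hl : l.val = k.val := by
            rcases hrel with ⟨_, h⟩ | ⟨_, h⟩ <;> omega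
          subst hji
          have hlk : l = k := Fin.ext hl
          rw [hlk]
      · rintro rfl
        refine ⟨?_, by rw [mem_windS_inr]; exact hu⟩
        simp only [dutchWindmill, fromRel_adj]
        refine ⟨?_, ?_⟩
        · intro hc
          simp only [Sum.inr.injEq, Prod.mk.injEq, Fin.ext_iff] at hc
          omega
        · right
          exact ⟨trivial, by first | trivial | omega⟩
    · -- k % 4 = 3, dominator is k-1
      have hlt : k.val - 1 < m - 1 := by omega
      refine ⟨Sum.inr (i, ⟨k.val - 1, hlt⟩), (mem_windS_inr n m i _).mpr (show windP (m-1) (k.val-1) from Or.inr (Or.inl (by omega))), ?_⟩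
      intro w
      constructor
      · rintro ⟨hadj, hw⟩
        match w with
        | Sum.inl x => exact absurd (mem_windS_inl n m) hw
        | Sum.inr (j, l) =>
          rw [mem_windS_inr] at hw
          have hw' : ¬ (l.val % 4 = 1 ∨ l.val % 4 = 2 ∨ ((m-1) % 4 = 1 ∧ l.val = m - 1 - 1)) := hw
          simp only [dutchWindmill, fromRel_adj] at hadj
          obtain ⟨hne, hrel⟩ := hadj
          have hji : j = i := by rcases hrel with ⟨h, _⟩ | ⟨h, _⟩ <;> simp [h]
          have hl : l.val = k.val := by
            rcases hrel with ⟨_, h⟩ | ⟨_, h⟩ <;> omega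
          subst hji
          have hlk : l = k := Fin.ext hl
          rw [hlk]
      · rintro rfl
        refine ⟨?_, by rw [mem_windS_inr]; exact hu⟩
        simp only [dutchWindmill, fromRel_adj]
        refine ⟨?_, ?_⟩
        · intro hc
          simp only [Sum.inr.injEq, Prod.mk.injEq, Fin.ext_iff] at hc
          omega
        · left
          exact ⟨trivial, by first | trivial | omega⟩

lemma windS_super (n m : ℕ) (hm : 4 ≤ m) :
    IsSuperDominatingSet (dutchWindmill n m) (windS n m) := by
  have h2 := windS_superPart n m hm
  refine ⟨?_, h2⟩
  intro u hu
  obtain ⟨v, hv, hvp⟩ := h2 u hu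
  exact ⟨v, hv, ((hvp u).mpr rfl).1⟩

/-- For the Dutch windmill graph `D_n^{(m)}` with `m ≥ 4`,
`γ_sp(D_n^{(m)}) ≤ n⌈(m-1)/2⌉ + 1`. -/
theorem stmt6 (n m : ℕ) (hm : 4 ≤ m) :
    superDominationNumber (dutchWindmill n m) ≤ n * ((m - 1 + 1) / 2) + 1 := by
  apply Nat.sInf_le
  exact ⟨windS n m, windS_super n m hm, windS_card n m⟩
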